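/- arXiv:1310.1020 — 4 statements merged into one kernel-verified Lean document; each statement's English description precedes it below -/
import Mathlib

section
/- Let ω(x) = √(γ|x|) for x < 0 and γ ∈ (0,2). Then the Durrleman-type expression (1 − x·ω'(x)/ω(x))² − (1/4)ω(x)²ω'(x)² + ω(x)ω''(x) equals −(1/(16x))·((γ² − 4)x − 4γ), and this expression is nonnegative for all x ≤ 4γ/(γ² − 4). -/
lemma durrleman_aux (γ : ℝ) (hγ : γ ∈ Set.Ioo (0:ℝ) 2) (x : ℝ) (hx : x < 0) :
      (1 - x * (-γ/(2*Real.sqrt (-γ*x))) / Real.sqrt (-γ*x))^2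
        - (1/4)*(Real.sqrt (-γ*x))^2 * (-γ/(2*Real.sqrt (-γ*x)))^2
        + Real.sqrt (-γ*x) * (-γ^2/(4*(-γ*x)^((3:ℝ)/2)))
      = -(1/(16*x)) * ((γ^2-4)*x - 4*γ) := by
  obtain ⟨hγ0, hγ2⟩ := hγ
  have hpos : 0 < -γ*x := by nlinarith
  have hs : 0 < Real.sqrt (-γ*x) := Real.sqrt_pos.mpr hpos
  have hs2 : (Real.sqrt (-γ*x))^2 = -γ*x := Real.sq_sqrt hpos.le
  have hr : (-γ*x)^((3:ℝ)/2) = (Real.sqrt (-γ*x))^3 := by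
    rw [show ((3:ℝ)/2) = (1/2)*(3:ℕ) by norm_num, Real.rpow_mul hpos.le,
      Real.rpow_natCast, ← Real.sqrt_eq_rpow]
  rw [hr]
  have hx0 : x ≠ 0 := hx.ne
  have hsne : Real.sqrt (-γ*x) ≠ 0 := hs.ne'
  set s := Real.sqrt (-γ*x) with hsdef
  have e1 : 1 - x * (-γ/(2*s)) / s = 1/2 := by
    field_simp
    nlinarith [hs2]
  have e2 : (1/4)*s^2 * (-γ/(2*s))^2 = γ^2/16 := by
    field_simp
    ring
  have e3 : s * (-γ^2/(4*s^3)) = γ/(4*x) := by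
    field_simp
    linear_combination -hs2
  rw [e1, e2, e3]
  field_simp
  ring

theorem durrleman_expression (γ : ℝ) (hγ : γ ∈ Set.Ioo (0:ℝ) 2) :
    (∀ x < (0:ℝ),
      (1 - x * (-γ/(2*Real.sqrt (-γ*x))) / Real.sqrt (-γ*x))^2
        - (1/4)*(Real.sqrt (-γ*x))^2 * (-γ/(2*Real.sqrt (-γ*x)))^2
        + Real.sqrt (-γ*x) * (-γ^2/(4*(-γ*x)^((3:ℝ)/2)))
      = -(1/(16*x)) * ((γ^2-4)*x - 4*γ)) ∧
    (∀ x ≤ 4*γ/(γ^2-4),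
      0 ≤ (1 - x * (-γ/(2*Real.sqrt (-γ*x))) / Real.sqrt (-γ*x))^2
        - (1/4)*(Real.sqrt (-γ*x))^2 * (-γ/(2*Real.sqrt (-γ*x)))^2
        + Real.sqrt (-γ*x) * (-γ^2/(4*(-γ*x)^((3:ℝ)/2)))) := by
  obtain ⟨hγ0, hγ2⟩ := hγ
  refine ⟨fun x hx => durrleman_aux γ ⟨hγ0, hγ2⟩ x hx, fun x hx => ?_⟩
  have hden : γ^2 - 4 < 0 := by nlinarith
  have hb : 4*γ/(γ^2-4) < 0 := div_neg_of_pos_of_neg (by linarith) hden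
  have hxneg : x < 0 := lt_of_le_of_lt hx hb
  rw [durrleman_aux γ ⟨hγ0, hγ2⟩ x hxneg]
  have h1 : 0 ≤ (γ^2-4)*x - 4*γ := by
    have := (le_div_iff_of_neg hden).mp hx
    nlinarith [this]
  have h2 : (0:ℝ) < -(1/(16*x)) := by
    have h16 : 16*x < 0 := by linarith
    have := div_neg_of_pos_of_neg (one_pos (α:=ℝ)) h16
    linarith
  exact mul_nonneg h2.le h1
end

section
/- Let S be a nonnegative integrable random variable with E[S] = S₀ > 0 and P(S = 0) = p > 0. Define G(K) = (K/S₀)·E[(S₀²/K − S)⁺] for K > 0. Then G(K) → p·S₀ > 0 as K → ∞; consequently G cannot be of the form G(K) = E[(X − K)⁺] for any integrable random variable X (since such a call price function tends to 0 at infinity). -/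
open MeasureTheory

theorem G_not_a_call_price
    {Ω : Type*} [MeasurableSpace Ω] (μ : Measure Ω) [IsProbabilityMeasure μ]
    (S : Ω → ℝ) (hS : ∀ ω, 0 ≤ S ω) (hint : Integrable S μ)
    (S₀ : ℝ) (hS0 : S₀ = ∫ ω, S ω ∂μ) (hS0pos : 0 < S₀)
    (p : ℝ) (hp : p = (μ {ω | S ω = 0}).toReal) (hppos : 0 < p)
    (G : ℝ → ℝ) (hG : G = fun K => (K/S₀) * ∫ ω, max (S₀^2/K - S ω) 0 ∂μ) :
    Filter.Tendsto G Filter.atTop (nhds (p * S₀)) ∧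
    0 < p * S₀ ∧
    ¬ ∃ (Ω' : Type) (_ : MeasurableSpace Ω') (ν : Measure Ω')
        (_ : IsProbabilityMeasure ν) (X : Ω' → ℝ),
        Integrable X ν ∧ (∀ ω, 0 ≤ X ω) ∧
        ∀ K > 0, G K = ∫ ω, max (X ω - K) 0 ∂ν := by
  -- measurable version of S
  obtain ⟨S', hmeas, heq⟩ := hint.1
  have hsetm : MeasurableSet {ω | S' ω = 0} :=
    hmeas.measurable (measurableSet_singleton 0)
  have hsetae : {ω | S ω = 0} =ᵐ[μ] {ω | S' ω = 0} := by
    filter_upwards [heq] with ω hω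
    show (S ω = 0) = (S' ω = 0)
    rw [hω]
  have hmeq : μ {ω | S ω = 0} = μ {ω | S' ω = 0} := measure_congr hsetae
  set F : ℝ → Ω → ℝ := fun K ω => max (S₀ - (K/S₀) * S ω) 0 with hF
  set g : Ω → ℝ := Set.indicator {ω | S' ω = 0} (fun _ => S₀) with hg
  have hgint : ∫ ω, g ω ∂μ = p * S₀ := by
    rw [hg]
    rw [integral_indicator_const S₀ hsetm, measureReal_def, ← hmeq, ← hp, smul_eq_mul]
  -- G K = ∫ F K for K > 0
  have hGF : ∀ K : ℝ, 0 < K → G K = ∫ ω, F K ω ∂μ := by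
    intro K hK
    rw [hG]
    simp only
    rw [← integral_const_mul]
    apply integral_congr_ae
    filter_upwards with ω
    rw [hF]
    simp only
    rw [mul_max_of_nonneg _ _ (div_nonneg hK.le hS0pos.le), mul_zero]
    congr 1
    field_simp
  -- dominated convergence
  have htend : Filter.Tendsto (fun K => ∫ ω, F K ω ∂μ) Filter.atTop
      (nhds (∫ ω, g ω ∂μ)) := by
    apply tendsto_integral_filter_of_dominated_convergence (fun _ => S₀)
    · filter_upwards with K
      exact (aestronglyMeasurable_const.sub (hint.1.const_mul _)).sup
        aestronglyMeasurable_const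
    · filter_upwards [Filter.eventually_ge_atTop (0:ℝ)] with K hK
      filter_upwards with ω
      rw [Real.norm_eq_abs, abs_of_nonneg (le_max_right _ _)]
      apply max_le _ hS0pos.le
      have : 0 ≤ (K/S₀) * S ω := mul_nonneg (div_nonneg hK hS0pos.le) (hS ω)
      linarith
    · exact integrable_const _
    · filter_upwards [heq] with ω hω
      by_cases h0 : S ω = 0
      · have hg0 : g ω = S₀ := by
          rw [hg, Set.indicator_of_mem]
          rw [Set.mem_setOf_eq, ← hω]; exact h0
        rw [hg0]
        apply tendsto_const_nhds.congr
        intro K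
        rw [hF]; simp [h0, hS0pos.le]
      · have hSpos : 0 < S ω := lt_of_le_of_ne (hS ω) (Ne.symm h0)
        have hg0 : g ω = 0 := by
          rw [hg, Set.indicator_of_notMem]
          rw [Set.mem_setOf_eq, ← hω]; exact h0
        rw [hg0]
        apply tendsto_const_nhds.congr'
        filter_upwards [Filter.eventually_ge_atTop (S₀^2 / S ω)] with K hK
        rw [hF]
        simp only
        symm
        apply max_eq_right
        have h1 : S₀^2 ≤ K * S ω := (div_le_iff₀ hSpos).mp hK
        have h2 : S₀ ≤ K / S₀ * S ω := by
          rw [div_mul_eq_mul_div, le_div_iff₀ hS0pos]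
          nlinarith
        linarith
  have hGtend : Filter.Tendsto G Filter.atTop (nhds (p * S₀)) := by
    rw [← hgint]
    apply htend.congr'
    filter_upwards [Filter.eventually_gt_atTop (0:ℝ)] with K hK
    exact (hGF K hK).symm
  refine ⟨hGtend, mul_pos hppos hS0pos, ?_⟩
  rintro ⟨Ω', _, ν, _, X, hXint, hXnn, hXG⟩
  have hCtend : Filter.Tendsto (fun K => ∫ ω, max (X ω - K) 0 ∂ν)
      Filter.atTop (nhds (∫ ω, (0:ℝ) ∂ν)) := by
    apply tendsto_integral_filter_of_dominated_convergence X
    · filter_upwards with K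
      exact (hXint.1.sub aestronglyMeasurable_const).sup aestronglyMeasurable_const
    · filter_upwards [Filter.eventually_ge_atTop (0:ℝ)] with K hK
      filter_upwards with ω
      rw [Real.norm_eq_abs, abs_of_nonneg (le_max_right _ _)]
      apply max_le _ (hXnn ω)
      linarith
    · exact hXint
    · filter_upwards with ω
      apply tendsto_const_nhds.congr'
      filter_upwards [Filter.eventually_ge_atTop (X ω)] with K hK
      symm
      apply max_eq_right
      linarith
  have hGtend0 : Filter.Tendsto G Filter.atTop (nhds 0) := by
    have : (∫ ω, (0:ℝ) ∂ν) = 0 := integral_zero _ _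
    rw [this] at hCtend
    apply hCtend.congr'
    filter_upwards [Filter.eventually_gt_atTop (0:ℝ)] with K hK
    exact (hXG K hK).symm
  have := tendsto_nhds_unique hGtend hGtend0
  have := mul_pos hppos hS0pos
  linarith
end

section
/- Let S̃ > 0 ℙ-a.s. with E[S̃^L w(S̃)]-type geometric symmetry: suppose E[φ(S̃/s₀)] = E[(S̃/s₀)·φ(s₀/S̃)] for all bounded measurable φ, where s₀ = E[S̃]. Let Z be independent of S̃ with ℙ(Z = 1) = 1 − p, ℙ(Z = 0) = p, and S = S̃·Z, S₀ = E[S] = (1−p)s₀. Then for dℚ/dℙ = S/S₀, the ℙ-law of (1−p)S/S₀ conditional on {S > 0} equals the ℚ-law of S₀/((1−p)S). -/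
open MeasureTheory ProbabilityTheory

theorem restricted_symmetry
    {Ω : Type*} [MeasurableSpace Ω] (Pr : Measure Ω) [IsProbabilityMeasure Pr]
    (St Z : Ω → ℝ) (hStmeas : Measurable St) (hZmeas : Measurable Z)
    (hStpos : ∀ ω, 0 < St ω) (hint : Integrable St Pr)
    (s₀ : ℝ) (hs0 : s₀ = ∫ ω, St ω ∂Pr) (hs0pos : 0 < s₀)
    (hsym : ∀ φ : ℝ → ℝ, Measurable φ → (∀ t, 0 ≤ φ t) → (∃ B, ∀ t, φ t ≤ B) →
      ∫ ω, φ (St ω / s₀) ∂Pr = ∫ ω, (St ω / s₀) * φ (s₀ / St ω) ∂Pr)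
    (p : ℝ) (hp : p ∈ Set.Ioo (0:ℝ) 1)
    (hZval : ∀ ω, Z ω = 0 ∨ Z ω = 1) (hZp : (Pr {ω | Z ω = 0}).toReal = p)
    (hindep : IndepFun St Z Pr)
    (S : Ω → ℝ) (hSdef : S = fun ω => St ω * Z ω)
    (S₀ : ℝ) (hS0 : S₀ = (1-p) * s₀)
    (Qm : Measure Ω) (hQ : Qm = Pr.withDensity (fun ω => ENNReal.ofReal (S ω / S₀))) :
    Measure.map (fun ω => (1-p) * S ω / S₀) (Pr[|{ω | 0 < S ω}]) =
      Measure.map (fun ω => S₀ / ((1-p) * S ω)) Qm := by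
  obtain ⟨hp0, hp1⟩ := hp
  have h1p : (0:ℝ) < 1 - p := by linarith
  have h1pne : (1:ℝ) - p ≠ 0 := ne_of_gt h1p
  have hs0ne : s₀ ≠ 0 := ne_of_gt hs0pos
  have hS0pos : 0 < S₀ := by rw [hS0]; positivity
  have hS0ne : S₀ ≠ 0 := ne_of_gt hS0pos
  -- simplify the two maps
  have hf1 : (fun ω => (1-p) * S ω / S₀) = fun ω => S ω / s₀ := by
    funext ω; rw [hS0]; field_simp
  have hf2 : (fun ω => S₀ / ((1-p) * S ω)) = fun ω => s₀ / S ω := by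
    funext ω
    rcases eq_or_ne (S ω) 0 with h | h
    · simp [h]
    · rw [hS0]; field_simp
  rw [hf1, hf2]
  have hSmeas : Measurable S := by rw [hSdef]; exact hStmeas.mul hZmeas
  -- S > 0 iff Z = 1
  have hZ1 : {ω | 0 < S ω} = Z ⁻¹' {1} := by
    ext ω
    rcases hZval ω with h | h
    · simp [hSdef, h]
    · simp [hSdef, h, hStpos ω]
  have hZ1meas : MeasurableSet (Z ⁻¹' {1}) := hZmeas (measurableSet_singleton 1)
  have hZ0meas : MeasurableSet (Z ⁻¹' {0}) := hZmeas (measurableSet_singleton 0)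
  have hZ0 : Pr (Z ⁻¹' {0}) = ENNReal.ofReal p := by
    rw [← hZp, ENNReal.ofReal_toReal (measure_ne_top _ _)]
    rfl
  have hcompl : Z ⁻¹' {1} = (Z ⁻¹' {0})ᶜ := by
    ext ω; rcases hZval ω with h | h <;> simp [h]
  have hPrZ1 : Pr (Z ⁻¹' {1}) = ENNReal.ofReal (1 - p) := by
    rw [hcompl, measure_compl hZ0meas (measure_ne_top _ _), hZ0, measure_univ]
    rw [← ENNReal.ofReal_one, ← ENNReal.ofReal_sub _ (le_of_lt hp0)]
  have hofne0 : ENNReal.ofReal (1 - p) ≠ 0 := by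
    simp [ENNReal.ofReal_eq_zero]; linarith
  have hoftop : ENNReal.ofReal (1 - p) ≠ ⊤ := ENNReal.ofReal_ne_top
  -- measurability of maps
  have hmap1 : Measurable fun ω => S ω / s₀ := hSmeas.div measurable_const
  have hmap2 : Measurable fun ω => s₀ / S ω := measurable_const.div hSmeas
  ext A hA
  rw [Measure.map_apply hmap1 hA, Measure.map_apply hmap2 hA,
    cond_apply (hZ1 ▸ hZ1meas) Pr]
  set B : Set ℝ := (fun x => x / s₀) ⁻¹' A with hB
  have hBmeas : MeasurableSet B := (measurable_id.div_const s₀) hA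
  -- LHS simplification
  have hinter : Z ⁻¹' {1} ∩ ((fun ω => S ω / s₀) ⁻¹' A) = St ⁻¹' B ∩ Z ⁻¹' {1} := by
    ext ω
    simp only [Set.mem_inter_iff, Set.mem_preimage, Set.mem_setOf_eq, Set.mem_singleton_iff]
    constructor
    · rintro ⟨hz, hs⟩
      refine ⟨?_, hz⟩
      simpa [hB, hSdef, hz] using hs
    · rintro ⟨hs, hz⟩
      refine ⟨hz, ?_⟩
      simpa [hB, hSdef, hz] using hs
  have hLHS : Pr (Z ⁻¹' {1} ∩ ((fun ω => S ω / s₀) ⁻¹' A)) =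
      Pr (St ⁻¹' B) * ENNReal.ofReal (1 - p) := by
    rw [hinter, hindep.measure_inter_preimage_eq_mul _ _ hBmeas (measurableSet_singleton 1),
      hPrZ1]
  rw [hZ1, hLHS, hPrZ1, mul_comm (Pr (St ⁻¹' B)) (ENNReal.ofReal (1-p)), ← mul_assoc,
    ENNReal.inv_mul_cancel hofne0 hoftop, one_mul]
  · -- now compute the RHS
    rw [hQ, withDensity_apply _ (hmap2 hA)]
    set D : Set Ω := (fun ω => s₀ / S ω) ⁻¹' A with hD
    set φ : ℝ → ℝ := A.indicator (fun _ => 1) with hφ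
    have hφmeas : Measurable φ := measurable_const.indicator hA
    have hφnn : ∀ t, 0 ≤ φ t := fun t => Set.indicator_nonneg (fun _ _ => zero_le_one) t
    have hφle : ∀ t, φ t ≤ 1 := fun t => Set.indicator_le_self' (fun _ _ => zero_le_one) t
    set X : Ω → ℝ := fun ω => St ω * φ (s₀ / St ω) with hX
    have hXmeas : Measurable X := hStmeas.mul (hφmeas.comp (measurable_const.div hStmeas))
    have hXint : Integrable X Pr := by
      refine hint.mono hXmeas.aestronglyMeasurable (Filter.Eventually.of_forall fun ω => ?_)
      have h1 : 0 ≤ X ω := mul_nonneg (hStpos ω).le (hφnn _)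
      have h2 : X ω ≤ St ω := by
        calc X ω ≤ St ω * 1 := by
              exact mul_le_mul_of_nonneg_left (hφle _) (hStpos ω).le
          _ = St ω := mul_one _
      rw [Real.norm_eq_abs, Real.norm_eq_abs, abs_of_nonneg h1,
        abs_of_nonneg (hStpos ω).le]
      exact h2
    have hZint : Integrable Z Pr := by
      refine (integrable_const (1:ℝ)).mono hZmeas.aestronglyMeasurable
        (Filter.Eventually.of_forall fun ω => ?_)
      rcases hZval ω with h | h <;> simp [h]
    -- the density function restricted to D, as a real function
    set Y : Ω → ℝ := D.indicator (fun ω => S ω / S₀) with hY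
    have hYeq : ∀ ω, Y ω = (1 / S₀) * (X ω * Z ω) := by
      intro ω
      rcases hZval ω with h | h
      · have hs : S ω = 0 := by simp [hSdef, h]
        simp [hY, h, Set.indicator_apply, hs]
      · have hs : S ω = St ω := by simp [hSdef, h]
        by_cases hmem : ω ∈ D
        · have hmem' : s₀ / St ω ∈ A := by
            have := hmem; rw [hD, Set.mem_preimage, hs] at this; exact this
          simp only [hY, Set.indicator_of_mem hmem, hX, hφ, h, hs,
            Set.indicator_of_mem hmem', mul_one]
          ring
        · have hmem' : s₀ / St ω ∉ A := by
            intro hc; apply hmem; rw [hD, Set.mem_preimage, hs]; exact hc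
          simp [hY, Set.indicator_of_notMem hmem, hX, hφ,
            Set.indicator_of_notMem hmem', h]
      ;
    have hYmeas : Measurable Y := (hSmeas.div measurable_const).indicator (hmap2 hA)
    have hYnn : ∀ ω, 0 ≤ Y ω := by
      intro ω; rw [hYeq ω]
      rcases hZval ω with h | h
      · simp [h]
      · simp only [h, mul_one]
        exact mul_nonneg (by positivity) (mul_nonneg (hStpos ω).le (hφnn _))
    have hYint : Integrable Y Pr := by
      have : Y = fun ω => (1 / S₀) * (X ω * Z ω) := funext hYeq
      rw [this]
      refine Integrable.const_mul ?_ _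
      refine hXint.mono (hXmeas.mul hZmeas).aestronglyMeasurable
        (Filter.Eventually.of_forall fun ω => ?_)
      rcases hZval ω with h | h <;> simp [h, abs_nonneg]
    -- independence: X and Z
    have hindXZ : IndepFun X Z Pr := by
      have := hindep.comp (φ := fun x : ℝ => x * φ (s₀ / x)) (ψ := id)
        (measurable_id.mul (hφmeas.comp (measurable_const.div measurable_id))) measurable_id
      exact this
    have hintZ : ∫ ω, Z ω ∂Pr = 1 - p := by
      have hZind : ∫ ω, Z ω ∂Pr = ∫ ω, (Z ⁻¹' {1}).indicator (1 : Ω → ℝ) ω ∂Pr := by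
        congr 1; funext ω
        rcases hZval ω with h | h <;> simp [h, Set.indicator_apply]
      rw [hZind, integral_indicator_one hZ1meas, measureReal_def, hPrZ1, ENNReal.toReal_ofReal h1p.le]
    have hXZ : ∫ ω, X ω * Z ω ∂Pr = (∫ ω, X ω ∂Pr) * (1 - p) := by
      rw [← hintZ]
      exact hindXZ.integral_fun_mul_eq_mul_integral hXint.aestronglyMeasurable hZint.aestronglyMeasurable
    -- symmetry gives the value of ∫ X
    have hsymval : (Pr (St ⁻¹' B)).toReal = (1 / s₀) * ∫ ω, X ω ∂Pr := by
      have h := hsym φ hφmeas hφnn ⟨1, hφle⟩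
      have hL : ∫ ω, φ (St ω / s₀) ∂Pr = (Pr (St ⁻¹' B)).toReal := by
        have heq : ∫ ω, φ (St ω / s₀) ∂Pr = ∫ ω, (St ⁻¹' B).indicator (1 : Ω → ℝ) ω ∂Pr := by
          refine integral_congr_ae (Filter.Eventually.of_forall fun ω => ?_)
          by_cases h : St ω / s₀ ∈ A
          · simp [hφ, hB, Set.indicator_apply, Set.mem_preimage, h]
          · simp [hφ, hB, Set.indicator_apply, Set.mem_preimage, h]
        rw [heq, integral_indicator_one (hStmeas hBmeas), measureReal_def]
      have hR : ∫ ω, (St ω / s₀) * φ (s₀ / St ω) ∂Pr = (1 / s₀) * ∫ ω, X ω ∂Pr := by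
        rw [← integral_const_mul]
        congr 1; funext ω; rw [hX]; ring
      rw [← hL, h, hR]
    -- put it together
    have hlint : ∫⁻ ω in D, ENNReal.ofReal (S ω / S₀) ∂Pr
        = ENNReal.ofReal (∫ ω, Y ω ∂Pr) := by
      rw [ofReal_integral_eq_lintegral_ofReal hYint (Filter.Eventually.of_forall hYnn),
        ← lintegral_indicator (hmap2 hA) (fun ω => ENNReal.ofReal (S ω / S₀))]
      congr 1
      funext ω
      by_cases h : s₀ / S ω ∈ A <;> simp [hY, hD, Set.indicator_apply, h]
    rw [hlint]
    have hYval : ∫ ω, Y ω ∂Pr = (Pr (St ⁻¹' B)).toReal := by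
      have : ∫ ω, Y ω ∂Pr = (1 / S₀) * ∫ ω, X ω * Z ω ∂Pr := by
        rw [← integral_const_mul]
        congr 1; funext ω; exact hYeq ω
      rw [this, hXZ, hsymval, hS0]
      field_simp
    rw [hYval, ENNReal.ofReal_toReal (measure_ne_top _ _)]
end

section
/- Suppose the put price satisfies P(K) = E[(K−S)⁺] with ℙ(S = 0) = p > 0 and E[S] = S₀. For log-moneyness x < 0 with K_x = S₀e^x, write C_BS(-x, I(x)√T) = E[(1 − e^{-x}S/S₀)⁺] (put-call parity form). Then N(d₁(-x, I(x)√T)) = p + R(K_x) + e^{-x}N(d₂(-x, I(x)√T)), where R(K) = P(K)/K − p, d_{1,2}(y,σ) = -y/σ ± σ/2, and the last term φ̄(x) := e^{-x}N(d₂(-x,I(x)√T)) satisfies 0 ≤ φ̄(x) ≤ e^{|x|}N(-√(2|x|)), hence limsup_{x→-∞} φ̄(x)·√(2π)·√(2|x|) ≤ 1. -/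
open MeasureTheory

noncomputable def gaussPdf (z : ℝ) : ℝ := Real.exp (-z^2/2) / Real.sqrt (2*Real.pi)
noncomputable def gaussCdf (d : ℝ) : ℝ := ∫ z in Set.Iic d, gaussPdf z
noncomputable def CBS (x σ : ℝ) : ℝ :=
  gaussCdf (-x/σ + σ/2) - Real.exp x * gaussCdf (-x/σ - σ/2)

open Real Filter Set Topology

lemma gaussPdf_nonneg (z : ℝ) : 0 ≤ gaussPdf z := by
  unfold gaussPdf; positivity

lemma gaussPdf_eq : gaussPdf = fun z => Real.exp (-(1/2) * z^2) * (Real.sqrt (2*Real.pi))⁻¹ := by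
  funext z; unfold gaussPdf; rw [div_eq_mul_inv]; ring_nf

lemma integrable_gaussPdf : Integrable gaussPdf := by
  rw [gaussPdf_eq]
  exact (integrable_exp_neg_mul_sq (by norm_num : (0:ℝ) < 1/2)).mul_const _

lemma integral_gaussPdf : ∫ z, gaussPdf z = 1 := by
  rw [gaussPdf_eq]
  rw [MeasureTheory.integral_mul_const, integral_gaussian]
  rw [show (π / (1/2)) = 2 * π by ring]
  rw [mul_inv_cancel₀ (by positivity : Real.sqrt (2*π) ≠ 0)]

lemma gaussCdf_nonneg (d : ℝ) : 0 ≤ gaussCdf d :=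
  integral_nonneg fun z => gaussPdf_nonneg z

lemma gaussCdf_mono {a b : ℝ} (h : a ≤ b) : gaussCdf a ≤ gaussCdf b :=
  setIntegral_mono_set integrable_gaussPdf.integrableOn
    (Eventually.of_forall gaussPdf_nonneg)
    (HasSubset.Subset.eventuallyLE (Iic_subset_Iic.2 h))

lemma gaussCdf_neg (d : ℝ) : gaussCdf (-d) = 1 - gaussCdf d := by
  have h1 : gaussCdf (-d) = ∫ z in Ioi d, gaussPdf z := by
    unfold gaussCdf
    have : ∀ z : ℝ, gaussPdf z = gaussPdf (-z) := by
      intro z; unfold gaussPdf; rw [neg_pow]; norm_num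
    rw [show (∫ z in Iic (-d), gaussPdf z) = ∫ z in Iic (-d), gaussPdf (-z) by
      exact setIntegral_congr_fun measurableSet_Iic fun z _ => this z]
    rw [integral_comp_neg_Iic, neg_neg]
  have h2 : gaussCdf d + gaussCdf (-d) = 1 := by
    rw [h1]
    unfold gaussCdf
    rw [intervalIntegral.integral_Iic_add_Ioi integrable_gaussPdf.integrableOn
      integrable_gaussPdf.integrableOn, integral_gaussPdf]
  linarith

lemma integrable_neg_mul_exp : Integrable (fun u : ℝ => -u * Real.exp (-u^2/2)) := by
  have := (integrable_mul_exp_neg_mul_sq (by norm_num : (0:ℝ) < 1/2)).neg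
  refine this.congr (Eventually.of_forall fun u => ?_)
  simp only [Pi.neg_apply]
  ring_nf

lemma integral_tail_deriv (a : ℝ) :
    ∫ u in Iic a, -u * Real.exp (-u^2/2) = Real.exp (-a^2/2) := by
  have hderiv : ∀ u ∈ Iio a, HasDerivAt (fun u : ℝ => Real.exp (-u^2/2))
      (-u * Real.exp (-u^2/2)) u := by
    intro u _
    have h1 : HasDerivAt (fun u : ℝ => -u^2/2) (-u) u := by
      have : HasDerivAt (fun x : ℝ => -x^2/2) (-(↑(2:ℕ) * u ^ (2 - 1)) / 2) u := ((hasDerivAt_pow 2 u).neg).div_const 2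
      convert this using 1
      simp; ring
    have := h1.exp
    convert this using 1
    ring
  have htend : Tendsto (fun u : ℝ => Real.exp (-u^2/2)) atBot (𝓝 0) := by
    apply Real.tendsto_exp_atBot.comp
    have ht : Tendsto (fun x : ℝ => x ^ 2) atTop atTop :=
      tendsto_pow_atTop two_ne_zero
    have ha : Tendsto (fun u : ℝ => u^2) atBot atTop := by
      have := ht.comp tendsto_abs_atBot_atTop
      refine this.congr fun u => ?_
      simp [Function.comp, sq_abs]
    have hb := ha.atTop_div_const (by norm_num : (0:ℝ) < 2)
    have hc := tendsto_neg_atTop_atBot.comp hb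
    refine hc.congr fun u => ?_
    simp [Function.comp, neg_div]
  have := MeasureTheory.integral_Iic_of_hasDerivAt_of_tendsto
    (Real.continuous_exp.comp (by continuity)).continuousWithinAt hderiv
    integrable_neg_mul_exp.integrableOn htend
  rw [this, sub_zero]; rfl

lemma gauss_tail {z : ℝ} (hz : 0 < z) : gaussCdf (-z) ≤ gaussPdf z / z := by
  have hsq : Real.sqrt (2*π) ≠ 0 := by positivity
  have hmono : gaussCdf (-z) ≤ ∫ u in Iic (-z), (-u/z) * gaussPdf u := by
    unfold gaussCdf
    apply setIntegral_mono_on integrable_gaussPdf.integrableOn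
    · refine (Integrable.integrableOn ?_)
      have : (fun u : ℝ => (-u/z) * gaussPdf u)
          = fun u => (-u * Real.exp (-u^2/2)) * (z * Real.sqrt (2*π))⁻¹ := by
        funext u; unfold gaussPdf; field_simp
      rw [this]
      exact integrable_neg_mul_exp.mul_const _
    · exact measurableSet_Iic
    · intro u hu
      simp only [mem_Iic] at hu
      have h1 : (1:ℝ) ≤ -u/z := by
        rw [le_div_iff₀ hz]; linarith
      nlinarith [gaussPdf_nonneg u]
  have heq : (∫ u in Iic (-z), (-u/z) * gaussPdf u) = gaussPdf z / z := by
    have : (fun u : ℝ => (-u/z) * gaussPdf u)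
        = fun u => (-u * Real.exp (-u^2/2)) * (z * Real.sqrt (2*π))⁻¹ := by
      funext u; unfold gaussPdf; field_simp
    rw [this, MeasureTheory.integral_mul_const, integral_tail_deriv]
    unfold gaussPdf
    rw [show (-z)^2 = z^2 by ring]
    field_simp
  linarith
theorem d1_parity_estimate
    {Ω : Type*} [MeasurableSpace Ω] (ℙ : Measure Ω) [IsProbabilityMeasure ℙ]
    (S : Ω → ℝ) (hS : ∀ ω, 0 ≤ S ω) (hint : Integrable S ℙ)
    (S₀ T p : ℝ) (hS0 : S₀ = ∫ ω, S ω ∂ℙ) (hS0pos : 0 < S₀) (hT : 0 < T)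
    (hp : p = (ℙ {ω | S ω = 0}).toReal) (hppos : 0 < p)
    (I : ℝ → ℝ) (hIpos : ∀ x < (0:ℝ), 0 < I x)
    (hI : ∀ x : ℝ, ∫ ω, max (S ω - S₀*Real.exp x) 0 ∂ℙ = S₀ * CBS x (I x * Real.sqrt T))
    (R : ℝ → ℝ) (hR : R = fun K => (∫ ω, max (K - S ω) 0 ∂ℙ) / K - p)
    (φb : ℝ → ℝ)
    (hφb : φb = fun x => Real.exp (-x) *
      gaussCdf (x/(I x * Real.sqrt T) - I x * Real.sqrt T/2)) :
    (∀ x < (0:ℝ),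
      gaussCdf (x/(I x * Real.sqrt T) + I x * Real.sqrt T/2)
        = p + R (S₀ * Real.exp x) + φb x) ∧
    (∀ x < (0:ℝ), 0 ≤ φb x ∧ φb x ≤ Real.exp |x| * gaussCdf (-Real.sqrt (2*|x|))) ∧
    Filter.limsup (fun x => φb x * Real.sqrt (2*Real.pi) * Real.sqrt (2*|x|))
      Filter.atBot ≤ 1 := by
  have hparity : ∀ K : ℝ, (∫ ω, max (K - S ω) 0 ∂ℙ)
      = (∫ ω, max (S ω - K) 0 ∂ℙ) - (∫ ω, S ω ∂ℙ) + K := by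
    intro K
    have hC : Integrable (fun ω => max (S ω - K) 0) ℙ :=
      (hint.sub (integrable_const K)).pos_part
    have hfun : (fun ω => max (K - S ω) 0) = fun ω => max (S ω - K) 0 + (K - S ω) := by
      funext ω
      have h1 := max_zero_sub_max_neg_zero_eq_self (S ω - K)
      have h2 : -(S ω - K) = K - S ω := by ring
      rw [h2] at h1
      linarith
    have hD : Integrable (fun ω => K - S ω) ℙ := (integrable_const K).sub hint
    rw [hfun, integral_add hC hD,
      integral_sub (integrable_const K) hint, integral_const]
    simp [measure_univ]
    ring
  have part1 : ∀ x < (0:ℝ),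
      gaussCdf (x/(I x * Real.sqrt T) + I x * Real.sqrt T/2)
        = p + R (S₀ * Real.exp x) + φb x := by
    intro x hx
    have hσ : 0 < I x * Real.sqrt T := mul_pos (hIpos x hx) (Real.sqrt_pos.2 hT)
    set σ := I x * Real.sqrt T with hσdef
    have hex : Real.exp x ≠ 0 := (Real.exp_pos x).ne'
    have hS0ne : S₀ ≠ 0 := hS0pos.ne'
    have hP := hparity (S₀ * Real.exp x)
    rw [hI x, ← hS0] at hP
    rw [hR, hφb]
    simp only
    rw [hP]
    unfold CBS
    rw [show -x/σ + σ/2 = -(x/σ - σ/2) by ring,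
      show -x/σ - σ/2 = -(x/σ + σ/2) by ring, gaussCdf_neg, gaussCdf_neg, Real.exp_neg]
    simp only [← hσdef]
    field_simp
    ring
  have part2 : ∀ x < (0:ℝ), 0 ≤ φb x ∧
      φb x ≤ Real.exp |x| * gaussCdf (-Real.sqrt (2*|x|)) := by
    intro x hx
    have hσ : 0 < I x * Real.sqrt T := mul_pos (hIpos x hx) (Real.sqrt_pos.2 hT)
    set σ := I x * Real.sqrt T with hσdef
    constructor
    · rw [hφb]
      exact mul_nonneg (Real.exp_pos _).le (gaussCdf_nonneg _)
    · rw [hφb]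
      simp only
      rw [abs_of_neg hx]
      apply mul_le_mul_of_nonneg_left _ (Real.exp_pos _).le
      apply gaussCdf_mono
      have hxpos : 0 < -x := by linarith
      have key : Real.sqrt (2*(-x)) ≤ (-x)/σ + σ/2 := by
        have h1 : ((-x)/σ) * σ = -x := div_mul_cancel₀ _ hσ.ne'
        have h2 : 2*(-x) ≤ ((-x)/σ + σ/2)^2 := by
          nlinarith [sq_nonneg ((-x)/σ - σ/2)]
        calc Real.sqrt (2*(-x)) ≤ Real.sqrt (((-x)/σ + σ/2)^2) := Real.sqrt_le_sqrt h2
          _ = (-x)/σ + σ/2 := Real.sqrt_sq (by positivity)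
      have heq : x/σ - σ/2 = -((-x)/σ + σ/2) := by ring
      rw [heq]
      linarith
  refine ⟨part1, part2, ?_⟩
  have hev : ∀ᶠ x in Filter.atBot,
      φb x * Real.sqrt (2*Real.pi) * Real.sqrt (2*|x|) ≤ 1 := by
    filter_upwards [eventually_lt_atBot (0:ℝ)] with x hx
    have hb := (part2 x hx).2
    have habs : 0 < |x| := abs_pos.2 hx.ne
    have hz : 0 < Real.sqrt (2*|x|) := Real.sqrt_pos.2 (by positivity)
    have htail := gauss_tail hz
    have hz2 : (Real.sqrt (2*|x|))^2 = 2*|x| := Real.sq_sqrt (by positivity)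
    have hpdf : gaussPdf (Real.sqrt (2*|x|)) = Real.exp (-|x|) / Real.sqrt (2*π) := by
      unfold gaussPdf
      rw [show -Real.sqrt (2*|x|)^2/2 = -|x| by rw [hz2]; ring]
    calc φb x * Real.sqrt (2*Real.pi) * Real.sqrt (2*|x|)
        ≤ (Real.exp |x| * gaussCdf (-Real.sqrt (2*|x|))) * Real.sqrt (2*Real.pi)
            * Real.sqrt (2*|x|) := by
          exact mul_le_mul_of_nonneg_right
            (mul_le_mul_of_nonneg_right hb (Real.sqrt_nonneg _)) (Real.sqrt_nonneg _)
      _ ≤ (Real.exp |x| * (gaussPdf (Real.sqrt (2*|x|)) / Real.sqrt (2*|x|)))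
            * Real.sqrt (2*Real.pi) * Real.sqrt (2*|x|) := by
          exact mul_le_mul_of_nonneg_right (mul_le_mul_of_nonneg_right
            (mul_le_mul_of_nonneg_left htail (Real.exp_pos _).le) (Real.sqrt_nonneg _))
            (Real.sqrt_nonneg _)
      _ = 1 := by
          rw [hpdf]
          have hsq : Real.sqrt (2*π) ≠ 0 := by positivity
          field_simp
          rw [← Real.exp_add]
          simp
  have hev0 : ∀ᶠ x in Filter.atBot,
      (0:ℝ) ≤ φb x * Real.sqrt (2*Real.pi) * Real.sqrt (2*|x|) := by
    filter_upwards [eventually_lt_atBot (0:ℝ)] with x hx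
    exact mul_nonneg (mul_nonneg (part2 x hx).1 (Real.sqrt_nonneg _)) (Real.sqrt_nonneg _)
  exact Filter.limsup_le_of_le (Filter.isCoboundedUnder_le_of_eventually_le _ hev0) hev
end
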